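/- arXiv:2109.10968 — 2 statements merged into one kernel-verified Lean document; each statement's English description precedes it below -/
import Mathlib

section
/- For every pair of lotteries i, j ∈ L: ∑_{ω∈Ω} P ω · U i ω ≥ ∑_{ω∈Ω} P ω · U j ω if and only if ∑_{ω∈Ω} P ω · Uᵀ i ω ≥ ∑_{ω∈Ω} P ω · Uᵀ j ω. That is, when the outcome of every lottery is always learned ex post, a regret averse decision maker (κ > 0) and a regret neutral one (κ = 0) rank lotteries identically. -/
/-- **Theorem 1 (regret equivalence).** When the outcome of every lottery is always
learned ex post, a regret averse decision maker (`κ > 0`) and a regret neutral one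
(`κ = 0`) rank lotteries identically: for every pair of lotteries `i, j`,
`𝔼[U i] ≥ 𝔼[U j] ↔ 𝔼[Uᵀ i] ≥ 𝔼[Uᵀ j]`, where
`Uᵀ ℓ ω = U ℓ ω - κ * (max_{ℓ'} U ℓ' ω - U ℓ ω)`. -/
theorem regret_equivalent
    {Ω L : Type*} [Fintype Ω] [Fintype L] [Nonempty Ω] [Nonempty L]
    (P : Ω → ℝ) (hPpos : ∀ ω, 0 < P ω) (hPsum : ∑ ω, P ω = 1)
    (U : L → Ω → ℝ) (κ : ℝ) (hκ : 0 ≤ κ)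
    (UT : L → Ω → ℝ)
    (hUT : ∀ (ℓ : L) (ω : Ω),
      UT ℓ ω = U ℓ ω -
        κ * (Finset.univ.sup' Finset.univ_nonempty (fun ℓ' => U ℓ' ω) - U ℓ ω)) :
    ∀ i j : L,
      (∑ ω, P ω * U i ω ≥ ∑ ω, P ω * U j ω) ↔
      (∑ ω, P ω * UT i ω ≥ ∑ ω, P ω * UT j ω) := by
  intro i j
  have key : ∑ ω, P ω * UT i ω - ∑ ω, P ω * UT j ω
      = (1 + κ) * (∑ ω, P ω * U i ω - ∑ ω, P ω * U j ω) := by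
    simp only [hUT]
    rw [← Finset.sum_sub_distrib, ← Finset.sum_sub_distrib, Finset.mul_sum]
    exact Finset.sum_congr rfl fun ω _ => by ring
  have h1κ : 0 < 1 + κ := by linarith
  constructor <;> intro h
  · have : 0 ≤ ∑ ω, P ω * UT i ω - ∑ ω, P ω * UT j ω := by
      rw [key]; exact mul_nonneg h1κ.le (by linarith)
    linarith
  · nlinarith [key]
end

section
/- Suppose the observation correspondences satisfy O'' k ⊆ O' k for every lottery k ∈ L (so the environment with O' is more informative than the one with O''). Then for every lottery k ∈ L, the expected total utility of choosing k in the more informative environment is no higher than in the less informative one: ∑_{ω∈Ω} P ω · Uᵀ_{O'} k ω ≤ ∑_{ω∈Ω} P ω · Uᵀ_{O''} k ω. That is, a regret averse individual never prefers a more informative ex-post information environment. -/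
/-- **Theorem 2 (ignorance is bliss).** If `O'' k ⊆ O' k` for every lottery `k`
(so the ex-post information environment given by `O'` is more informative than the
one given by `O''`), then for every lottery `k` the expected total utility of
choosing `k` in the more informative environment is no higher than in the less
informative one. Here `Uᵀ_O k ω = U k ω − κ·(max_{h ∈ O k} U h ω − U k ω)`. -/
theorem more_informative_never_preferred
    {Ω L : Type*} [Fintype Ω] [Fintype L] [Nonempty Ω] [Nonempty L]
    (P : Ω → ℝ) (hPpos : ∀ ω, 0 < P ω) (hPsum : ∑ ω, P ω = 1)
    (U : L → Ω → ℝ) (κ : ℝ) (hκ : 0 ≤ κ)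
    (O' O'' : L → Finset L)
    (hO' : ∀ k, k ∈ O' k) (hO'' : ∀ k, k ∈ O'' k)
    (hsub : ∀ k, O'' k ⊆ O' k) :
    ∀ k : L,
      ∑ ω, P ω * (U k ω - κ * ((O' k).sup' ⟨k, hO' k⟩ (fun h => U h ω) - U k ω)) ≤
      ∑ ω, P ω * (U k ω - κ * ((O'' k).sup' ⟨k, hO'' k⟩ (fun h => U h ω) - U k ω)) := by
  intro k
  apply Finset.sum_le_sum
  intro ω _
  have hsup : (O'' k).sup' ⟨k, hO'' k⟩ (fun h => U h ω) ≤
      (O' k).sup' ⟨k, hO' k⟩ (fun h => U h ω) :=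
    Finset.sup'_le _ _ fun h hh =>
      Finset.le_sup' (f := fun h => U h ω) (hsub k hh)
  have := mul_le_mul_of_nonneg_left (sub_le_sub_right hsup (U k ω)) hκ
  nlinarith [(hPpos ω).le]
end
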